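/- Let p be a prime, G an elementary abelian p-group of rank 3, and A1 < A2 subgroups of G with |A1| = p and |A2| = p². Let A be the S-ring over G whose basic sets are the singletons {x} for x ∈ A1, the A1-cosets contained in A2 \ A1, and the A2-cosets contained in G \ A2 (the S-ring ℤC_p ≀ ℤC_p ≀ ℤC_p). Then |aut_G(A)| = p³. -/

import Mathlib

open Pointwise

/-! ### Cayley digraphs and CI-subsets (groups written additively) -/

/-- The arc set `R(S) = {(g, s+g) : g ∈ G, s ∈ S}` of the Cayley digraph `Cay(G,S)`. -/
def arcs {G : Type*} [AddGroup G] (S : Set G) : Set (G × G) :=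
  {a | ∃ s ∈ S, a.2 = s + a.1}

/-- The image `R^f` of a set of arcs under a permutation `f`. -/
def pmap {G : Type*} (f : Equiv.Perm G) (R : Set (G × G)) : Set (G × G) :=
  (fun a => (f a.1, f a.2)) '' R

/-- `S ⊆ G` is a CI-subset: every Cayley digraph isomorphic to `Cay(G,S)` is Cayley
isomorphic to it. -/
def IsCISubset {G : Type*} [AddGroup G] (S : Set G) : Prop :=
  ∀ T : Set G, (∃ f : Equiv.Perm G, pmap f (arcs S) = arcs T) →
    ∃ φ : G ≃+ G, ⇑φ '' S = T

/-- `G` is a DCI-group: every subset of `G` is a CI-subset. -/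
def IsDCI (G : Type*) [AddGroup G] : Prop := ∀ S : Set G, IsCISubset S

/-! ### S-rings, given by their partitions into basic sets.

The condition that the ℤ-span of the blocks is a subring of the group ring is encoded
combinatorially: the number of ways to write an element as a sum `x + y` with `x ∈ X`,
`y ∈ Y` (for blocks `X, Y`) is constant on each block. -/

structure SRing (G : Type*) [AddGroup G] where
  blocks : Set (Set G)
  nonempty_mem : ∀ X ∈ blocks, X.Nonempty
  existsUnique_mem : ∀ g : G, ∃! X, X ∈ blocks ∧ g ∈ X
  zero_mem : ({0} : Set G) ∈ blocks
  neg_mem : ∀ X ∈ blocks, -X ∈ blocks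
  count_const : ∀ X ∈ blocks, ∀ Y ∈ blocks, ∀ Z ∈ blocks, ∀ z ∈ Z, ∀ z' ∈ Z,
    {a : G × G | a.1 ∈ X ∧ a.2 ∈ Y ∧ a.1 + a.2 = z}.ncard =
      {a : G × G | a.1 ∈ X ∧ a.2 ∈ Y ∧ a.1 + a.2 = z'}.ncard

/-- The automorphisms of an S-ring with family of basic sets `Bl`:
permutations preserving each arc set `R(X)`, `X ∈ Bl`. -/
def autPerm {G : Type*} [AddGroup G] (Bl : Set (Set G)) : Set (Equiv.Perm G) :=
  {f | ∀ X ∈ Bl, pmap f (arcs X) = arcs X}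

/-- The isomorphisms from an S-ring with basic sets `Bl` onto some S-ring over `G`. -/
def isoPerm {G : Type*} [AddGroup G] (Bl : Set (Set G)) : Set (Equiv.Perm G) :=
  {f | ∃ B : SRing G,
    {R | ∃ X ∈ Bl, R = pmap f (arcs X)} = {R | ∃ Y ∈ B.blocks, R = arcs Y}}

/-- An S-ring is CI if `iso(A) = Aut(A)Aut(G)` (composition: first the S-ring
automorphism, then the group automorphism). -/
def IsCIBlocks {G : Type*} [AddGroup G] (Bl : Set (Set G)) : Prop :=
  isoPerm Bl = {f | ∃ γ ∈ autPerm Bl, ∃ φ : G ≃+ G, ∀ x, f x = φ (γ x)}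

/-- The right translation `x ↦ x + g` as a permutation. -/
def addRightPerm {G : Type*} [AddGroup G] (g : G) : Equiv.Perm G := Equiv.addRight g

/-- `G_r`, the set of right translations of `G`. -/
def rSet (G : Type*) [AddGroup G] : Set (Equiv.Perm G) := Set.range addRightPerm

/-- The basic sets of `V(K,G)`: the orbits on `G` of the stabilizer `K_e` of the
identity in `K`. -/
def VBlocks {G : Type*} [AddGroup G] (K : Set (Equiv.Perm G)) : Set (Set G) :=
  {O | ∃ g : G, O = {h | ∃ k ∈ K, k 0 = 0 ∧ k g = h}}

/-- An S-ring is schurian if it equals `V(K,G)` for some `G_r ≤ K ≤ Sym(G)`. -/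
def IsSchurianBlocks {G : Type*} [AddGroup G] (Bl : Set (Set G)) : Prop :=
  ∃ K : Subgroup (Equiv.Perm G), rSet G ⊆ (K : Set (Equiv.Perm G)) ∧
    Bl = VBlocks (K : Set (Equiv.Perm G))

/-- `f` lies in the 2-closure of `K`: on every pair it agrees with some member of `K`. -/
def in2Closure {G : Type*} (K : Set (Equiv.Perm G)) (f : Equiv.Perm G) : Prop :=
  ∀ a b : G, ∃ k ∈ K, k a = f a ∧ k b = f b

/-- `K` is 2-closed: `K = K^(2)`. -/
def Is2Closed {G : Type*} (K : Subgroup (Equiv.Perm G)) : Prop :=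
  ∀ f, in2Closure (K : Set (Equiv.Perm G)) f → f ∈ K

/-- Conjugate `S^γ` of a set of permutations. -/
def conjSet {G : Type*} (γ : Equiv.Perm G) (S : Set (Equiv.Perm G)) : Set (Equiv.Perm G) :=
  (fun s => γ⁻¹ * s * γ) '' S

/-- `K1 ⪯_G K2`: `K1` is a `G`-complete subgroup of `K2`. -/
def GComplete {G : Type*} [AddGroup G] (K1 K2 : Subgroup (Equiv.Perm G)) : Prop :=
  K1 ≤ K2 ∧ ∀ γ : Equiv.Perm G, conjSet γ (rSet G) ⊆ (K2 : Set (Equiv.Perm G)) →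
    ∃ δ ∈ K2, conjSet δ (conjSet γ (rSet G)) ⊆ (K1 : Set (Equiv.Perm G))

/-- `K ∈ Sup_2(G_r)`: `K` is a 2-closed subgroup of `Sym(G)` containing `G_r`. -/
def InSup2 {G : Type*} [AddGroup G] (K : Subgroup (Equiv.Perm G)) : Prop :=
  rSet G ⊆ (K : Set (Equiv.Perm G)) ∧ Is2Closed K

/-- `K ∈ Sup_2^min(G_r)`: `K` is a minimal element of `(Sup_2(G_r), ⪯_G)`. -/
def InSup2Min {G : Type*} [AddGroup G] (K : Subgroup (Equiv.Perm G)) : Prop :=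
  InSup2 K ∧ ∀ K' : Subgroup (Equiv.Perm G), InSup2 K' → GComplete K' K → K' = K

/-! ### A-sets, A-subgroups, sections, radicals, products -/

/-- `X` is an `A`-set: a union of basic sets. -/
def IsASet {G : Type*} [AddGroup G] (Bl : Set (Set G)) (X : Set G) : Prop :=
  ∃ C ⊆ Bl, X = ⋃₀ C

/-- An `A`-subgroup. -/
def IsASubgroup {G : Type*} [AddGroup G] (Bl : Set (Set G)) (U : AddSubgroup G) : Prop :=
  IsASet Bl (U : Set G)

/-- The radical `rad(X) = {g : g + X = X + g = X}`. -/
def radSet {G : Type*} [AddGroup G] (X : Set G) : Set G :=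
  {g | (fun x => g + x) '' X = X ∧ (fun x => x + g) '' X = X}

/-- `A` is the `S`-wreath (generalized wreath) product for the section `S = U/L`. -/
def IsWreath {G : Type*} [AddGroup G] (Bl : Set (Set G)) (U L : AddSubgroup G) : Prop :=
  IsASubgroup Bl U ∧ IsASubgroup Bl L ∧ L ≤ U ∧ L.Normal ∧
    ∀ X ∈ Bl, ¬X ⊆ (U : Set G) → (L : Set G) ⊆ radSet X

/-- Nontrivial (proper) `S`-wreath product. -/
def IsNontrivialWreath {G : Type*} [AddGroup G] (Bl : Set (Set G))
    (U L : AddSubgroup G) : Prop :=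
  IsWreath Bl U L ∧ L ≠ ⊥ ∧ U ≠ ⊤

/-- `A` is decomposable: a nontrivial generalized wreath product. -/
def IsDecomposable {G : Type*} [AddGroup G] (Bl : Set (Set G)) : Prop :=
  ∃ U L : AddSubgroup G, IsNontrivialWreath Bl U L

/-! ### Cyclotomic S-rings, Cayley minimality, 2-minimality, normality -/

/-- The set of orbits on `G` of a group `M` of automorphisms of `G`. -/
def autOrbits {G : Type*} [AddGroup G] (M : AddSubgroup (AddAut G)) : Set (Set G) :=
  {O | ∃ g : G, O = {h | ∃ φ ∈ M, φ g = h}}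

/-- An S-ring is cyclotomic if its basic sets are the orbits of a group of
automorphisms of `G`. -/
def IsCyclotomic {G : Type*} [AddGroup G] (Bl : Set (Set G)) : Prop :=
  ∃ M : AddSubgroup (AddAut G), Bl = autOrbits M

/-- `aut_G(A) = Aut(A) ∩ Aut(G)`. -/
def autAddSet {G : Type*} [AddGroup G] (Bl : Set (Set G)) : Set (AddAut G) :=
  {φ | (φ : G ≃+ G).toEquiv ∈ autPerm Bl}

/-- Two sets of automorphisms have the same orbits on `G`. -/
def sameAutOrbits {G : Type*} [AddGroup G] (K M : Set (AddAut G)) : Prop :=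
  ∀ g : G, {h | ∃ φ ∈ K, φ g = h} = {h | ∃ φ ∈ M, φ g = h}

/-- A (cyclotomic) S-ring is Cayley minimal if the only subgroup of `Aut(G)` Cayley
equivalent to `aut_G(A)` is `aut_G(A)` itself. -/
def IsCayleyMinimal {G : Type*} [AddGroup G] (Bl : Set (Set G)) : Prop :=
  IsCyclotomic Bl ∧ ∀ K : AddSubgroup (AddAut G),
    sameAutOrbits (K : Set (AddAut G)) (autAddSet Bl) →
      (K : Set (AddAut G)) = autAddSet Bl

/-- Two sets of permutations have the same orbits on `G × G`. -/
def samePairOrbits {G : Type*} (K M : Set (Equiv.Perm G)) : Prop :=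
  ∀ a b : G, {c : G × G | ∃ f ∈ K, (f a, f b) = c} = {c : G × G | ∃ f ∈ M, (f a, f b) = c}

/-- An S-ring is 2-minimal if the only subgroup of `Sym(G)` containing `G_r` and
2-equivalent to `Aut(A)` is `Aut(A)` itself. -/
def Is2Minimal {G : Type*} [AddGroup G] (Bl : Set (Set G)) : Prop :=
  ∀ K : Subgroup (Equiv.Perm G), rSet G ⊆ (K : Set (Equiv.Perm G)) →
    samePairOrbits (K : Set (Equiv.Perm G)) (autPerm Bl) →
      (K : Set (Equiv.Perm G)) = autPerm Bl

/-- An S-ring is normal if `G_r` is normal in `Aut(A)`. -/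
def IsNormalBlocks {G : Type*} [AddGroup G] (Bl : Set (Set G)) : Prop :=
  ∀ σ ∈ autPerm Bl, ∀ t ∈ rSet G, σ * t * σ⁻¹ ∈ rSet G

/-- A set of permutations normalizes another one. -/
def normalizesInto {M : Type*} [Group M] (Δ N : Set M) : Prop :=
  ∀ σ ∈ Δ, ∀ t ∈ N, σ * t * σ⁻¹ ∈ N

/-! ### Kernels, restriction to subgroups, quotients and sections -/

/-- `Aut(A)_{G/L}`: the automorphisms of the S-ring fixing every `L`-coset setwise. -/
def kernelPerm {G : Type*} [AddGroup G] (Bl : Set (Set G)) (L : AddSubgroup G) :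
    Set (Equiv.Perm G) :=
  {f | f ∈ autPerm Bl ∧ ∀ g : G, ⇑f '' ((L : Set G) + {g}) = (L : Set G) + {g}}

/-- The basic sets of `A_U` (for an `A`-subgroup `U`), as subsets of `U`. -/
def subBlocks {G : Type*} [AddGroup G] (Bl : Set (Set G)) (U : AddSubgroup G) :
    Set (Set U) :=
  {Z | ∃ X ∈ Bl, X ⊆ (U : Set G) ∧ Z = ((Subtype.val) ⁻¹' X : Set U)}

/-- The basic sets of `A_{G/L}`: images of basic sets under `G → G/L`. -/
def quotBlocks {G : Type*} [AddGroup G] (Bl : Set (Set G)) (L : AddSubgroup G) :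
    Set (Set (G ⧸ L)) :=
  {Z | ∃ X ∈ Bl, Z = (QuotientAddGroup.mk : G → G ⧸ L) '' X}

/-- The basic sets of `A_S` for the section `S = U/L`: images under `U → U/L` of the
basic sets contained in `U`. -/
def secBlocks {G : Type*} [AddGroup G] (Bl : Set (Set G)) (U L : AddSubgroup G) :
    Set (Set (U ⧸ L.addSubgroupOf U)) :=
  {Z | ∃ X ∈ Bl, X ⊆ (U : Set G) ∧
    Z = (QuotientAddGroup.mk : U → U ⧸ L.addSubgroupOf U) '' {u : U | (u : G) ∈ X}}

/-- The permutations of an (invariant) subgroup `U` induced by members of `F`. -/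
def inducedPerm {G : Type*} [AddGroup G] (F : Set (Equiv.Perm G)) (U : AddSubgroup G) :
    Set (Equiv.Perm U) :=
  {σ | ∃ f ∈ F, ∀ x : U, (σ x : G) = f (x : G)}

/-- The automorphisms of an (invariant) subgroup `U` induced by members of `F ⊆ Aut(G)`. -/
def inducedAddAut {G : Type*} [AddGroup G] (F : Set (AddAut G)) (U : AddSubgroup G) :
    Set (AddAut U) :=
  {σ | ∃ φ ∈ F, ∀ x : U, ((σ x : U) : G) = φ (x : G)}

/-- `S^f = S`: the permutation `f` maps `U` onto itself and permutes the `L`-cosets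
inside `U`. -/
def secInvariant {G : Type*} [AddGroup G] (f : Equiv.Perm G) (U L : AddSubgroup G) : Prop :=
  ⇑f '' (U : Set G) = (U : Set G) ∧
    ∀ u ∈ U, ⇑f '' ((L : Set G) + {u}) = (L : Set G) + {f u}

/-- `σ` is the bijection `f^S` of the section `S = U/L` induced by `f`. -/
def inducesOnSec {G : Type*} [AddGroup G] (f : Equiv.Perm G) (U L : AddSubgroup G)
    (σ : Equiv.Perm (U ⧸ L.addSubgroupOf U)) : Prop :=
  ∀ u v : U, f (u : G) = (v : G) →
    σ (QuotientAddGroup.mk u) = QuotientAddGroup.mk v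

/-- `Δ^S`: the bijections of the section `S = U/L` induced by members of `Δ`
leaving `S` invariant. -/
def secPerms {G : Type*} [AddGroup G] (F : Set (Equiv.Perm G)) (U L : AddSubgroup G) :
    Set (Equiv.Perm (U ⧸ L.addSubgroupOf U)) :=
  {σ | ∃ f ∈ F, secInvariant f U L ∧ inducesOnSec f U L σ}

/-- `K^S` for `K ≤ Aut(U)`: automorphisms of `S = U/L` induced by members of `K`. -/
def secAutOfSub {G : Type*} [AddCommGroup G] (U L : AddSubgroup G)
    (K : Set (AddAut U)) : Set (AddAut (U ⧸ L.addSubgroupOf U)) :=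
  {ψ | ∃ φ ∈ K, ∀ u : U, ψ (QuotientAddGroup.mk u) = QuotientAddGroup.mk (φ u)}

/-- `K^S` for `K ≤ Aut(G/L)`: automorphisms of `S = U/L` obtained by restricting
members of `K`. -/
def secAutOfQuot {G : Type*} [AddCommGroup G] (U L : AddSubgroup G)
    (K : Set (AddAut (G ⧸ L))) : Set (AddAut (U ⧸ L.addSubgroupOf U)) :=
  {ψ | ∃ φ ∈ K, ∀ u v : U,
    φ (QuotientAddGroup.mk (u : G)) = QuotientAddGroup.mk (v : G) →
      ψ (QuotientAddGroup.mk u) = QuotientAddGroup.mk v}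

/-! ### p-S-rings and some particular S-rings -/

/-- A `p`-S-ring: all basic sets have `p`-power size. -/
def IsPSRing {G : Type*} [AddGroup G] (p : ℕ) (Bl : Set (Set G)) : Prop :=
  ∀ X ∈ Bl, ∃ k : ℕ, X.ncard = p ^ k

/-- The family `Bl` of basic sets is that of `ℤC_p ≀ ℤC_p ≀ ℤC_p`: singletons in `B1`,
`B1`-cosets in `B2 \ B1`, and `B2`-cosets outside `B2`. -/
def IsWr3Blocks {G : Type*} [AddGroup G] (p : ℕ) (Bl : Set (Set G)) : Prop :=
  ∃ B1 B2 : AddSubgroup G, B1 < B2 ∧ (B1 : Set G).ncard = p ∧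
    (B2 : Set G).ncard = p ^ 2 ∧
    ∀ X : Set G, X ∈ Bl ↔
      ((∃ x ∈ B1, X = {x}) ∨
        (∃ x ∈ (B2 : Set G) \ (B1 : Set G), X = (B1 : Set G) + {x}) ∨
        (∃ x ∈ (Set.univ : Set G) \ (B2 : Set G), X = (B2 : Set G) + {x}))

/-- The family `Bl` of basic sets is that of `ℤC_p ≀ ℤC_p²`: singletons in `B1` and
`B1`-cosets outside `B1`. -/
def IsWrCpCp2Blocks {G : Type*} [AddGroup G] (p : ℕ) (Bl : Set (Set G)) : Prop :=
  ∃ B1 : AddSubgroup G, (B1 : Set G).ncard = p ∧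
    ∀ X : Set G, X ∈ Bl ↔
      ((∃ x ∈ B1, X = {x}) ∨ (∃ x : G, x ∉ B1 ∧ X = (B1 : Set G) + {x}))

/-- The unipotent map `σ(x,y,z) = (x, x+y, y+z)` on `(ℤ/p)³` defining `D_p`. -/
def dpStep (p : ℕ) (v : Fin 3 → ZMod p) : Fin 3 → ZMod p :=
  ![v 0, v 0 + v 1, v 1 + v 2]

/-- The orbit of a point under the cyclic group generated by `σ`. -/
def dpOrbit (p : ℕ) (x : Fin 3 → ZMod p) : Set (Fin 3 → ZMod p) :=
  {y | ∃ k : ℕ, (dpStep p)^[k] x = y}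

/-- The family `Bl` of basic sets is (isomorphic to) that of the S-ring `D_p`. -/
def IsDpBlocks {W : Type*} [AddGroup W] (p : ℕ) (Bl : Set (Set W)) : Prop :=
  ∃ e : W ≃+ (Fin 3 → ZMod p), (fun X => ⇑e '' X) '' Bl = Set.range (dpOrbit p)

/-! ### Cayley graph automorphisms and regular subgroups -/

/-- `Aut(Cay(G,X))`. -/
def autCaySet {G : Type*} [AddGroup G] (X : Set G) : Set (Equiv.Perm G) :=
  {f | pmap f (arcs X) = arcs X}

/-- A regular subgroup of `Sym(G)`: transitive, and only the identity has a fixed point. -/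
def IsRegularSubgroup {G : Type*} (K : Subgroup (Equiv.Perm G)) : Prop :=
  (∀ a b : G, ∃ k ∈ K, k a = b) ∧ ∀ k ∈ K, (∃ a : G, k a = a) → k = 1

/-! ### The groups `C_p^4 × C_q` -/

/-- The Sylow `p`-subgroup `P` of `C_p^4 × C_q`. -/
def Psub (p q : ℕ) : AddSubgroup ((Fin 4 → ZMod p) × ZMod q) :=
  (⊤ : AddSubgroup (Fin 4 → ZMod p)).prod ⊥

/-- The Sylow `q`-subgroup `Q` of `C_p^4 × C_q`. -/
def Qsub (p q : ℕ) : AddSubgroup ((Fin 4 → ZMod p) × ZMod q) :=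
  (⊥ : AddSubgroup (Fin 4 → ZMod p)).prod ⊤


section AuxMain
variable {G : Type*} [AddCommGroup G]

lemma arcs_eq_iff {S T : Set G} (h : arcs S = arcs T) : S = T := by
  ext x
  have h0 : ∀ U : Set G, x ∈ U ↔ ((0 : G), x) ∈ arcs U := by
    intro U; simp [arcs]
  rw [h0 S, h0 T, h]

lemma pmap_arcs (φ : G ≃+ G) (X : Set G) :
    pmap (φ : G ≃+ G).toEquiv (arcs X) = arcs (⇑φ '' X) := by
  ext a
  constructor
  · rintro ⟨⟨g, y⟩, ⟨s, hs, hy⟩, rfl⟩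
    exact ⟨φ s, ⟨s, hs, rfl⟩, by simp only at hy; simp [hy, map_add]⟩
  · rintro ⟨t, ⟨s, hs, rfl⟩, ha⟩
    refine ⟨(φ.symm a.1, s + φ.symm a.1), ⟨s, hs, rfl⟩, ?_⟩
    obtain ⟨a1, a2⟩ := a
    simp only [Prod.mk.injEq] at ha ⊢
    simp [ha, map_add]

lemma nsmul_mod (p : ℕ) {g : G} (hg : p • g = 0) (m : ℕ) : m • g = (m % p) • g := by
  conv_lhs => rw [← Nat.mod_add_div m p]
  rw [add_nsmul, mul_nsmul, hg, smul_zero, add_zero]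

lemma dvd_of_zsmul_mem {p : ℕ} (hp : p.Prime) {H : AddSubgroup G} {x : G}
    (hx : x ∉ H) (hpx : p • x = 0) {m : ℤ} (hm : m • x ∈ H) : (p : ℤ) ∣ m := by
  by_contra hdvd
  have hnd : ¬ p ∣ m.natAbs := fun h =>
    hdvd (Int.dvd_natAbs.mp (Int.natCast_dvd_natCast.mpr h))
  have hcop : Nat.Coprime p m.natAbs := (Nat.Prime.coprime_iff_not_dvd hp).2 hnd
  have habs : |m| • x ∈ H := by
    rcases abs_choice m with h | h
    · rwa [h]
    · rw [h]; simpa using H.neg_mem hm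
  have hbez : (1 : ℤ) = p * Nat.gcdA p m.natAbs + |m| * Nat.gcdB p m.natAbs := by
    have h := Nat.gcd_eq_gcd_ab p m.natAbs
    rw [hcop] at h
    push_cast at h
    linarith
  have : x ∈ H := by
    have h1 : (1 : ℤ) • x ∈ H := by
      rw [hbez, add_smul, mul_comm (p : ℤ), mul_smul, mul_comm (|m|), mul_smul]
      refine H.add_mem ?_ (H.zsmul_mem habs _)
      have hpz : ((p : ℤ)) • x = 0 := by rw [natCast_zsmul, hpx]
      rw [hpz, smul_zero]
      exact H.zero_mem
    simpa using h1
  exact hx this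

lemma zsmul_zmod_val {p : ℕ} [NeZero p] {x : G} (hpx : p • x = 0) (n : ℤ) :
    (((n : ZMod p)).val : ℤ) • x = n • x := by
  have h2 : (p : ℤ) ∣ ((n : ZMod p).val : ℤ) - n := by
    rw [← ZMod.intCast_zmod_eq_zero_iff_dvd]
    push_cast [ZMod.natCast_val, ZMod.cast_id]
    simp
  obtain ⟨q, hq⟩ := h2
  have hn : ((n : ZMod p).val : ℤ) = n + p * q := by linarith
  rw [hn, add_smul, mul_comm, mul_smul]
  have hpz : ((p : ℤ)) • x = 0 := by rw [natCast_zsmul, hpx]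
  rw [hpz, smul_zero, add_zero]

lemma card_sup_closure {p : ℕ} (hp : p.Prime) [Finite G] {H : AddSubgroup G} {x : G}
    (hx : x ∉ H) (hpx : p • x = 0) :
    Nat.card ↥(H ⊔ AddSubgroup.closure {x}) = Nat.card H * p := by
  haveI : NeZero p := ⟨hp.ne_zero⟩
  have hxc : x ∈ AddSubgroup.closure ({x} : Set G) :=
    AddSubgroup.subset_closure (Set.mem_singleton x)
  have hmem : ∀ (a : H) (k : ZMod p),
      (a : G) + k.val • x ∈ H ⊔ AddSubgroup.closure ({x} : Set G) := by
    intro a k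
    refine AddSubgroup.add_mem _ (AddSubgroup.mem_sup_left a.2) ?_
    exact AddSubgroup.mem_sup_right (AddSubgroup.nsmul_mem _ hxc _)
  let F : H × ZMod p → ↥(H ⊔ AddSubgroup.closure ({x} : Set G)) :=
    fun a => ⟨(a.1 : G) + a.2.val • x, hmem a.1 a.2⟩
  have hbij : Function.Bijective F := by
    constructor
    · rintro ⟨a, k⟩ ⟨b, l⟩ hab
      have hab' : (a : G) + k.val • x = (b : G) + l.val • x := congrArg Subtype.val hab
      have hd : ((k.val : ℤ) - l.val) • x ∈ H := by
        have he : (k.val : ℤ) • x - (l.val : ℤ) • x = (b : G) - a := by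
          simp only [natCast_zsmul]
          rw [sub_eq_sub_iff_add_eq_add]
          linear_combination (norm := abel) hab'
        rw [sub_smul, he]
        exact H.sub_mem b.2 a.2
      have hdvd : (p : ℤ) ∣ (k.val : ℤ) - l.val := dvd_of_zsmul_mem hp hx hpx hd
      have hkl : k = l := by
        have h0 : (((k.val : ℤ) - l.val : ℤ) : ZMod p) = 0 :=
          (ZMod.intCast_zmod_eq_zero_iff_dvd _ _).2 hdvd
        push_cast [ZMod.natCast_val, ZMod.cast_id] at h0
        linear_combination h0
      subst hkl
      have hABeq : a = b := by
        apply Subtype.ext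
        have := hab'
        simpa using this
      rw [hABeq]
    · rintro ⟨y, hy⟩
      rw [AddSubgroup.mem_sup] at hy
      obtain ⟨a, ha, z, hz, hzy⟩ := hy
      rw [AddSubgroup.mem_closure_singleton] at hz
      obtain ⟨n, rfl⟩ := hz
      refine ⟨(⟨a, ha⟩, (n : ZMod p)), ?_⟩
      apply Subtype.ext
      show a + ((n : ZMod p)).val • x = y
      rw [← hzy]
      congr 1
      rw [← natCast_zsmul]
      exact zsmul_zmod_val hpx n
  have hc := Nat.card_eq_of_bijective _ hbij
  rw [← hc, Nat.card_prod, Nat.card_zmod]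

lemma exists_hom {p : ℕ} (hp : p.Prime) [Finite G] (H : AddSubgroup G) (x : G)
    (hcard : Nat.card (G ⧸ H) = p) (hx : x ∉ H) :
    ∃ ν : G →+ ZMod p, ν x = 1 ∧ ∀ y ∈ H, ν y = 0 := by
  haveI : NeZero p := ⟨hp.ne_zero⟩
  haveI : Fact (1 < p) := ⟨hp.one_lt⟩
  set Q := G ⧸ H
  set xb : Q := QuotientAddGroup.mk x with hxb
  have hxb0 : xb ≠ 0 := by
    intro h
    exact hx ((QuotientAddGroup.eq_zero_iff x).1 h)
  have hordvd : addOrderOf xb ∣ p := hcard ▸ addOrderOf_dvd_natCard xb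
  have hord : addOrderOf xb = p := by
    rcases (Nat.Prime.eq_one_or_self_of_dvd hp _ hordvd) with h | h
    · exact absurd (AddMonoid.addOrderOf_eq_one_iff.mp h) hxb0
    · exact h
  have hpxb : (zmultiplesHom Q xb) (p : ℤ) = 0 := by
    simp only [zmultiplesHom_apply, natCast_zsmul]
    rw [← hord]
    exact addOrderOf_nsmul_eq_zero xb
  set f : ZMod p →+ Q := ZMod.lift p ⟨zmultiplesHom Q xb, hpxb⟩ with hf
  have hfval : ∀ k : ZMod p, f k = (k.val : ℤ) • xb := by
    intro k
    have hk : ((k.val : ℤ) : ZMod p) = k := by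
      rw [Int.cast_natCast, ZMod.natCast_val, ZMod.cast_id]
    calc f k = f (((k.val : ℤ) : ZMod p)) := by rw [hk]
      _ = (k.val : ℤ) • xb := by rw [hf, ZMod.lift_coe]; rfl
  have hfinj : Function.Injective f := by
    rw [injective_iff_map_eq_zero]
    intro k hk
    rw [hfval, natCast_zsmul] at hk
    have hdvd : addOrderOf xb ∣ k.val := addOrderOf_dvd_of_nsmul_eq_zero hk
    rw [hord] at hdvd
    exact (ZMod.val_eq_zero k).mp (Nat.eq_zero_of_dvd_of_lt hdvd (ZMod.val_lt k))
  have hfbij : Function.Bijective f := by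
    rw [Nat.bijective_iff_injective_and_card]
    exact ⟨hfinj, by rw [Nat.card_zmod, hcard]⟩
  set e : ZMod p ≃+ Q := AddEquiv.ofBijective f hfbij with he
  refine ⟨(e.symm.toAddMonoidHom.comp (QuotientAddGroup.mk' H)), ?_, ?_⟩
  · have he1 : e 1 = xb := by
      have h1 : f 1 = xb := by
        rw [hfval]
        simp [ZMod.val_one]
      simpa [he] using h1
    show e.symm (QuotientAddGroup.mk x) = 1
    rw [show (QuotientAddGroup.mk x : Q) = xb from rfl, ← he1, AddEquiv.symm_apply_apply]
  · intro y hy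
    show e.symm (QuotientAddGroup.mk y) = 0
    have h0 : (QuotientAddGroup.mk y : Q) = 0 := (QuotientAddGroup.eq_zero_iff y).2 hy
    rw [h0]
    simp

lemma ncard_coe_addSubgroup (H : AddSubgroup G) : (H : Set G).ncard = Nat.card H := by
  rw [← Nat.card_coe_set_eq, SetLike.coe_sort_coe]

lemma addSubgroup_eq_of_le_of_ncard [Finite G] {H K : AddSubgroup G} (hle : H ≤ K)
    (h : Nat.card K ≤ Nat.card H) : H = K := by
  apply SetLike.coe_injective
  refine Set.eq_of_subset_of_ncard_le hle ?_ (Set.toFinite _)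
  rw [ncard_coe_addSubgroup, ncard_coe_addSubgroup]
  exact h

end AuxMain


/-- For the S-ring `A ≅ ℤC_p ≀ ℤC_p ≀ ℤC_p` over an elementary abelian
`p`-group of rank `3`, one has `|aut_G(A)| = p³`. -/
theorem statement9 (p : ℕ) (hp : p.Prime) (G : Type*) [AddCommGroup G] [Finite G]
    (hGp : ∀ g : G, p • g = 0) (hcard : Nat.card G = p ^ 3)
    (A1 A2 : AddSubgroup G) (h12 : A1 < A2)
    (hA1 : (A1 : Set G).ncard = p) (hA2 : (A2 : Set G).ncard = p ^ 2)
    (A : SRing G)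
    (hblocks : ∀ X : Set G, X ∈ A.blocks ↔
      ((∃ x ∈ A1, X = {x}) ∨
        (∃ x ∈ (A2 : Set G) \ (A1 : Set G), X = (A1 : Set G) + {x}) ∨
        (∃ x ∈ (Set.univ : Set G) \ (A2 : Set G), X = (A2 : Set G) + {x}))) :
    (autAddSet A.blocks).ncard = p ^ 3 := by
  haveI : NeZero p := ⟨hp.ne_zero⟩
  haveI : Fact (1 < p) := ⟨hp.one_lt⟩
  have hA1le : A1 ≤ A2 := le_of_lt h12
  have hcard1 : Nat.card A1 = p := by rw [← ncard_coe_addSubgroup, hA1]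
  have hcard2 : Nat.card A2 = p ^ 2 := by rw [← ncard_coe_addSubgroup, hA2]
  obtain ⟨b, hbA2, hbA1⟩ := SetLike.exists_of_lt h12
  have hcex : ∃ c : G, c ∉ A2 := by
    by_contra hc
    push_neg at hc
    have : (A2 : Set G) = Set.univ := Set.eq_univ_of_forall hc
    rw [this, Set.ncard_univ, hcard] at hA2
    exact absurd (Nat.pow_right_injective hp.two_le hA2.symm) (by norm_num)
  obtain ⟨c, hcA2⟩ := hcex
  have hcA1 : c ∉ A1 := fun h' => hcA2 (hA1le h')
  have hsup1 : A1 ⊔ AddSubgroup.closure {b} = A2 := by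
    apply addSubgroup_eq_of_le_of_ncard
    · exact sup_le hA1le ((AddSubgroup.closure_le A2).2 (Set.singleton_subset_iff.2 hbA2))
    · rw [card_sup_closure hp hbA1 (hGp b), hcard1, hcard2, pow_two]
  have hsup2 : A2 ⊔ AddSubgroup.closure {c} = ⊤ := by
    apply addSubgroup_eq_of_le_of_ncard le_top
    rw [card_sup_closure hp hcA2 (hGp c), hcard2]
    have htop : Nat.card (⊤ : AddSubgroup G) = Nat.card G := by
      rw [← ncard_coe_addSubgroup]
      simp [Set.ncard_univ]
    rw [htop, hcard]
    exact le_of_eq (by ring)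
  have hT : autAddSet A.blocks =
      {φ : AddAut G | (∀ a ∈ A1, φ a = a) ∧ (∀ x ∈ A2, φ x - x ∈ A1) ∧
        (∀ x : G, φ x - x ∈ A2)} := by
    ext φ
    have himg : φ ∈ autAddSet A.blocks ↔ ∀ X ∈ A.blocks, ⇑φ '' X = X := by
      constructor
      · intro h X hX
        have h' : ∀ Y ∈ A.blocks, pmap (φ : G ≃+ G).toEquiv (arcs Y) = arcs Y := h
        exact arcs_eq_iff ((pmap_arcs φ X).symm.trans (h' X hX))
      · intro h
        show ∀ X ∈ A.blocks, pmap (φ : G ≃+ G).toEquiv (arcs X) = arcs X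
        intro X hX
        rw [pmap_arcs φ X, h X hX]
    rw [himg]
    simp only [Set.mem_setOf_eq]
    constructor
    · intro h
      have hC1 : ∀ a ∈ A1, φ a = a := by
        intro a ha
        have hXa : ({a} : Set G) ∈ A.blocks := (hblocks {a}).2 (Or.inl ⟨a, ha, rfl⟩)
        have := h _ hXa
        rw [Set.image_singleton] at this
        exact Set.singleton_eq_singleton_iff.mp this
      have hC2 : ∀ x ∈ A2, φ x - x ∈ A1 := by
        intro x hx
        by_cases hx1 : x ∈ A1
        · rw [hC1 x hx1, sub_self]; exact A1.zero_mem
        · have hX : ((A1 : Set G) + {x}) ∈ A.blocks :=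
            (hblocks _).2 (Or.inr (Or.inl ⟨x, ⟨hx, hx1⟩, rfl⟩))
          have himgX := h _ hX
          have hxX : x ∈ (A1 : Set G) + {x} := by
            rw [Set.add_singleton]
            exact ⟨0, A1.zero_mem, zero_add x⟩
          have hmem : φ x ∈ (A1 : Set G) + {x} := himgX ▸ Set.mem_image_of_mem _ hxX
          rw [Set.add_singleton] at hmem
          obtain ⟨a, ha, hax⟩ := hmem
          have hax2 : a + x = φ x := hax
          have hax' : φ x - x = a := by rw [← hax2]; abel
          rw [hax']; exact ha
      refine ⟨hC1, hC2, ?_⟩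
      intro x
      by_cases hx2 : x ∈ A2
      · exact hA1le (hC2 x hx2)
      · have hX : ((A2 : Set G) + {x}) ∈ A.blocks :=
          (hblocks _).2 (Or.inr (Or.inr ⟨x, ⟨trivial, hx2⟩, rfl⟩))
        have himgX := h _ hX
        have hxX : x ∈ (A2 : Set G) + {x} := by
          rw [Set.add_singleton]
          exact ⟨0, A2.zero_mem, zero_add x⟩
        have hmem : φ x ∈ (A2 : Set G) + {x} := himgX ▸ Set.mem_image_of_mem _ hxX
        rw [Set.add_singleton] at hmem
        obtain ⟨w, hw, hwx⟩ := hmem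
        have hwx2 : w + x = φ x := hwx
        have hwx' : φ x - x = w := by rw [← hwx2]; abel
        rw [hwx']; exact hw
    · rintro ⟨hC1, hC2, hC3⟩ X hX
      have hA2img : ⇑φ '' (A2 : Set G) = (A2 : Set G) := by
        have hsub : ⇑φ '' (A2 : Set G) ⊆ (A2 : Set G) := by
          rintro _ ⟨w, hw, rfl⟩
          rw [SetLike.mem_coe] at hw ⊢
          have hww : φ w = w + (φ w - w) := by abel
          rw [hww]
          exact A2.add_mem hw (hA1le (hC2 w hw))
        refine Set.eq_of_subset_of_ncard_le hsub ?_ (Set.toFinite _)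
        rw [Set.ncard_image_of_injective _ φ.injective]
      rcases (hblocks X).1 hX with ⟨a, ha, rfl⟩ | ⟨x, ⟨hx2, hx1⟩, rfl⟩ | ⟨x, ⟨-, hx2⟩, rfl⟩
      · rw [Set.image_singleton, hC1 a ha]
      · ext y
        constructor
        · rintro ⟨z, hz, rfl⟩
          rw [Set.add_singleton] at hz
          obtain ⟨a, ha, rfl⟩ := hz
          rw [Set.add_singleton]
          refine ⟨a + (φ x - x), A1.add_mem ha (hC2 x hx2), ?_⟩
          rw [map_add, hC1 a ha]
          abel
        · intro hy
          rw [Set.add_singleton] at hy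
          obtain ⟨a, ha, rfl⟩ := hy
          refine ⟨(a - (φ x - x)) + x, ?_, ?_⟩
          · rw [Set.add_singleton]
            exact ⟨a - (φ x - x), A1.sub_mem ha (hC2 x hx2), rfl⟩
          · rw [map_add, hC1 _ (A1.sub_mem ha (hC2 x hx2))]
            abel
      · ext y
        constructor
        · rintro ⟨z, hz, rfl⟩
          rw [Set.add_singleton] at hz
          obtain ⟨w, hw, rfl⟩ := hz
          rw [SetLike.mem_coe] at hw
          rw [Set.add_singleton]
          refine ⟨φ w + (φ x - x), ?_, ?_⟩
          · rw [SetLike.mem_coe]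
            refine A2.add_mem ?_ (hC3 x)
            have hww : φ w = w + (φ w - w) := by abel
            rw [hww]
            exact A2.add_mem hw (hA1le (hC2 w hw))
          · rw [map_add]; abel
        · intro hy
          rw [Set.add_singleton] at hy
          obtain ⟨w, hw, rfl⟩ := hy
          rw [SetLike.mem_coe] at hw
          have hw' : w - (φ x - x) ∈ (A2 : Set G) := by
            rw [SetLike.mem_coe]
            exact A2.sub_mem hw (hC3 x)
          rw [← hA2img] at hw'
          obtain ⟨w', hw'2, hw'eq⟩ := hw'
          refine ⟨w' + x, ?_, ?_⟩
          · rw [Set.add_singleton]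
            exact ⟨w', hw'2, rfl⟩
          · rw [map_add, hw'eq]
            abel
  rw [hT]
  set T := {φ : AddAut G | (∀ a ∈ A1, φ a = a) ∧ (∀ x ∈ A2, φ x - x ∈ A1) ∧
        (∀ x : G, φ x - x ∈ A2)} with hTdef
  set S2 := (A1 : Set G) ×ˢ (A2 : Set G) with hS2
  have hbij : Set.BijOn (fun φ : AddAut G => (φ b - b, φ c - c)) T S2 := by
    refine ⟨?_, ?_, ?_⟩
    · rintro φ ⟨hC1, hC2, hC3⟩
      exact Set.mem_prod.mpr ⟨hC2 b hbA2, hC3 c⟩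
    · rintro φ ⟨hC1, hC2, hC3⟩ ψ ⟨hD1, hD2, hD3⟩ heq
      simp only [Prod.mk.injEq] at heq
      have hbeq : φ b = ψ b := sub_left_inj.mp heq.1
      have hceq : φ c = ψ c := sub_left_inj.mp heq.2
      let E : AddSubgroup G :=
        { carrier := {g | φ g = ψ g}
          zero_mem' := by simp
          add_mem' := by
            intro g h hg hh
            simp only [Set.mem_setOf_eq, map_add] at *
            rw [hg, hh]
          neg_mem' := by
            intro g hg
            simp only [Set.mem_setOf_eq, map_neg] at *
            rw [hg] }
      have hA1E : A1 ≤ E := fun a ha => by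
        show φ a = ψ a
        rw [hC1 a ha, hD1 a ha]
      have hA2E : A2 ≤ E := by
        rw [← hsup1]
        exact sup_le hA1E
          ((AddSubgroup.closure_le E).2 (Set.singleton_subset_iff.2 (show b ∈ E from hbeq)))
      have hTopE : (⊤ : AddSubgroup G) ≤ E := by
        rw [← hsup2]
        exact sup_le hA2E
          ((AddSubgroup.closure_le E).2 (Set.singleton_subset_iff.2 (show c ∈ E from hceq)))
      exact AddEquiv.ext fun g => hTopE (AddSubgroup.mem_top g)
    · rintro ⟨u, v⟩ huv
      rw [hS2, Set.mem_prod] at huv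
      obtain ⟨hu, hv⟩ := huv
      rw [SetLike.mem_coe] at hu hv
      -- construct the functionals
      have hbK : b ∉ A1 ⊔ AddSubgroup.closure ({c} : Set G) := by
        intro hbK
        rw [AddSubgroup.mem_sup] at hbK
        obtain ⟨a, ha, z, hz, hzb⟩ := hbK
        rw [AddSubgroup.mem_closure_singleton] at hz
        obtain ⟨n, rfl⟩ := hz
        have hnc : n • c ∈ A2 := by
          have h' : n • c = b - a := by rw [← hzb]; abel
          rw [h']; exact A2.sub_mem hbA2 (hA1le ha)
        obtain ⟨q, hq⟩ := dvd_of_zsmul_mem hp hcA2 (hGp c) hnc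
        have hz0 : n • c = 0 := by
          rw [hq, mul_comm, mul_smul, natCast_zsmul, hGp c, smul_zero]
        rw [hz0, add_zero] at hzb
        exact hbA1 (hzb ▸ ha)
      have hq2 : Nat.card (G ⧸ A2) = p := by
        have h := AddSubgroup.card_eq_card_quotient_mul_card_addSubgroup A2
        rw [hcard, hcard2] at h
        have hple : p ^ 3 = p * p ^ 2 := by ring
        rw [hple] at h
        exact Nat.eq_of_mul_eq_mul_right (pow_pos hp.pos 2) h.symm
      have hqK : Nat.card (G ⧸ (A1 ⊔ AddSubgroup.closure ({c} : Set G))) = p := by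
        have h := AddSubgroup.card_eq_card_quotient_mul_card_addSubgroup
          (A1 ⊔ AddSubgroup.closure ({c} : Set G))
        rw [hcard, card_sup_closure hp hcA1 (hGp c), hcard1] at h
        have hple : p ^ 3 = p * (p * p) := by ring
        rw [hple] at h
        exact Nat.eq_of_mul_eq_mul_right (Nat.mul_pos hp.pos hp.pos) h.symm
      obtain ⟨lam, hlamc, hlam0⟩ := exists_hom hp A2 c hq2 hcA2
      obtain ⟨mu, hmub, hmu0⟩ :=
        exists_hom hp (A1 ⊔ AddSubgroup.closure ({c} : Set G)) b hqK hbK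
      have hlamu : lam u = 0 := hlam0 u (hA1le hu)
      have hlamv : lam v = 0 := hlam0 v hv
      have hlamb : lam b = 0 := hlam0 b hbA2
      have hmuu : mu u = 0 := hmu0 u (AddSubgroup.mem_sup_left hu)
      have hmuc : mu c = 0 :=
        hmu0 c (AddSubgroup.mem_sup_right (AddSubgroup.subset_closure (Set.mem_singleton c)))
      have hvaladd : ∀ (k l : ZMod p) (g : G), (k + l).val • g = k.val • g + l.val • g := by
        intro k l g
        rw [ZMod.val_add, ← nsmul_mod p (hGp g), add_nsmul]
      let Nf : G →+ G := AddMonoidHom.mk' (fun x => (lam x).val • v + (mu x).val • u)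
        (by
          intro x y
          simp only [map_add]
          rw [hvaladd, hvaladd]
          abel)
      have hNf : ∀ x : G, Nf x = (lam x).val • v + (mu x).val • u := fun _ => rfl
      have hNmemA2 : ∀ x : G, Nf x ∈ A2 := fun x =>
        A2.add_mem (A2.nsmul_mem hv _) (A2.nsmul_mem (hA1le hu) _)
      have hNA1 : ∀ x ∈ A2, Nf x ∈ A1 := by
        intro x hx
        rw [hNf, hlam0 x hx, ZMod.val_zero, zero_nsmul, zero_add]
        exact A1.nsmul_mem hu _
      have hNa : ∀ a ∈ A1, Nf a = 0 := by
        intro a ha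
        rw [hNf, hlam0 a (hA1le ha), hmu0 a (AddSubgroup.mem_sup_left ha),
          ZMod.val_zero, zero_nsmul, zero_nsmul, add_zero]
      have hN3 : ∀ x : G, Nf (Nf (Nf x)) = 0 := fun x =>
        hNa _ (hNA1 _ (hNmemA2 x))
      let φ : AddAut G :=
        { toFun := fun x => x + Nf x
          invFun := fun x => x - Nf x + Nf (Nf x)
          left_inv := by
            intro x
            simp only
            rw [map_add Nf x (Nf x), map_add Nf (Nf x) (Nf (Nf x)), hN3]
            abel
          right_inv := by
            intro x
            simp only
            have e1 : Nf (x - Nf x + Nf (Nf x)) = Nf x - Nf (Nf x) + Nf (Nf (Nf x)) := by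
              rw [map_add, map_sub]
            rw [e1, hN3]
            abel
          map_add' := by
            intro x y
            simp only [map_add]
            abel }
      have hφ : ∀ x : G, φ x = x + Nf x := fun _ => rfl
      refine ⟨φ, ⟨?_, ?_, ?_⟩, ?_⟩
      · intro a ha
        rw [hφ, hNa a ha, add_zero]
      · intro x hx
        have h' : φ x - x = Nf x := by rw [hφ]; abel
        rw [h']
        exact hNA1 x hx
      · intro x
        have h' : φ x - x = Nf x := by rw [hφ]; abel
        rw [h']
        exact hNmemA2 x
      · have hb' : φ b - b = u := by
          have h' : φ b - b = Nf b := by rw [hφ]; abel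
          rw [h', hNf, hlamb, hmub, ZMod.val_zero, ZMod.val_one, zero_nsmul, one_nsmul,
            zero_add]
        have hc' : φ c - c = v := by
          have h' : φ c - c = Nf c := by rw [hφ]; abel
          rw [h', hNf, hlamc, hmuc, ZMod.val_zero, ZMod.val_one, zero_nsmul, one_nsmul,
            add_zero]
        show ((φ b - b, φ c - c) : G × G) = (u, v)
        rw [hb', hc']
  have hcardS2 : S2.ncard = p * p ^ 2 := by
    rw [hS2, ← Nat.card_coe_set_eq, Nat.card_congr (Equiv.Set.prod _ _), Nat.card_prod,
      Nat.card_coe_set_eq, Nat.card_coe_set_eq, hA1, hA2]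
  calc T.ncard = S2.ncard := by rw [← hbij.image_eq, Set.ncard_image_of_injOn hbij.injOn]
    _ = p ^ 3 := by rw [hcardS2]; ring
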